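/- arXiv:2502.03800 — 4 statements merged into one kernel-verified Lean document; each statement's English description precedes it below -/
import Mathlib

section
/- For every real λ ≥ 1 and all natural numbers k, j, n, i with j ≤ k and i ≤ n, one has (k choose j)·(n choose i) ≤ λ · Γ(k + λn + 1) / (Γ(j + λi + 1) · Γ(k - j + λ(n - i) + 1)), where the right-hand side is the generalized binomial coefficient C(k + λn, j + λi) defined via the Gamma function. -/
open Real

lemma convex_shift_aux {f : ℝ → ℝ} (hf : ConvexOn ℝ (Set.Ioi 0) f) {x y h : ℝ}
    (hx : 0 < x) (hxy : x ≤ y) (hh : 0 ≤ h) :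
    f (x + h) + f y ≤ f x + f (y + h) := by
  rcases eq_or_lt_of_le hh with rfl | hh
  · simp
  have hD : 0 < y + h - x := by linarith
  set t : ℝ := h / (y + h - x) with ht
  have ht0 : 0 < t := div_pos hh hD
  have ht1 : t ≤ 1 := by
    rw [ht, div_le_one hD]; linarith
  have htD : t * (y + h - x) = h := div_mul_cancel₀ _ (ne_of_gt hD)
  have hxmem : x ∈ Set.Ioi (0:ℝ) := hx
  have hymem : y + h ∈ Set.Ioi (0:ℝ) := by
    simp only [Set.mem_Ioi]; linarith
  have h1 := hf.2 hxmem hymem (by linarith : (0:ℝ) ≤ 1 - t) (le_of_lt ht0)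
    (by ring)
  have h2 := hf.2 hxmem hymem (le_of_lt ht0) (by linarith : (0:ℝ) ≤ 1 - t)
    (by ring)
  have e1 : (1 - t) • x + t • (y + h) = x + h := by
    simp only [smul_eq_mul]; nlinarith [htD]
  have e2 : t • x + (1 - t) • (y + h) = y := by
    simp only [smul_eq_mul]; nlinarith [htD]
  rw [e1] at h1; rw [e2] at h2
  simp only [smul_eq_mul] at h1 h2
  linarith

lemma gamma_mul_le_aux {a b c : ℝ} (hc : 0 < c) (hca : c ≤ a) (hb : 0 < b) :
    Real.Gamma a * Real.Gamma (c + b) ≤ Real.Gamma c * Real.Gamma (a + b) := by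
  have ha : 0 < a := lt_of_lt_of_le hc hca
  have key := convex_shift_aux Real.convexOn_log_Gamma (x := c) (y := c + b)
    (h := a - c) hc (by linarith) (by linarith)
  have e1 : c + (a - c) = a := by ring
  have e2 : c + b + (a - c) = a + b := by ring
  rw [e1, e2] at key
  simp only [Function.comp_apply] at key
  have p1 : 0 < Real.Gamma a := Real.Gamma_pos_of_pos ha
  have p2 : 0 < Real.Gamma (c + b) := Real.Gamma_pos_of_pos (by linarith)
  have p3 : 0 < Real.Gamma c := Real.Gamma_pos_of_pos hc
  have p4 : 0 < Real.Gamma (a + b) := Real.Gamma_pos_of_pos (by linarith)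
  have := Real.exp_le_exp.mpr key
  rwa [Real.exp_add, Real.exp_add, Real.exp_log p1, Real.exp_log p2,
    Real.exp_log p3, Real.exp_log p4] at this

lemma choose_mul_choose_le_aux (k j n i : ℕ) :
    k.choose j * n.choose i ≤ (k + n).choose (j + i) := by
  rw [Nat.add_choose_eq]
  have hmem : ((j, i) : ℕ × ℕ) ∈ Finset.HasAntidiagonal.antidiagonal (j + i) := by simp
  exact Finset.single_le_sum (f := fun ij : ℕ × ℕ => k.choose ij.1 * n.choose ij.2)
    (fun _ _ => Nat.zero_le _) hmem

set_option maxHeartbeats 1000000 in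
theorem binom_prod_le_generalized_binom (lam : ℝ) (hlam : 1 ≤ lam)
    (k j n i : ℕ) (hj : j ≤ k) (hi : i ≤ n) :
    (k.choose j : ℝ) * (n.choose i : ℝ) ≤
      lam * Real.Gamma ((k : ℝ) + lam * n + 1) /
        (Real.Gamma ((j : ℝ) + lam * i + 1) *
          Real.Gamma (((k : ℝ) - j) + lam * ((n : ℝ) - i) + 1)) := by
  have hj' : (j:ℝ) ≤ k := by exact_mod_cast hj
  have hi' : (i:ℝ) ≤ n := by exact_mod_cast hi
  set A : ℝ := (j:ℝ) + lam * i + 1 with hA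
  set B : ℝ := ((k:ℝ) - j) + lam * ((n:ℝ) - i) + 1 with hB
  set C : ℝ := (j:ℝ) + i + 1 with hC
  set D : ℝ := ((k:ℝ) - j) + ((n:ℝ) - i) + 1 with hD
  have hi0 : (0:ℝ) ≤ i := Nat.cast_nonneg i
  have hni : (0:ℝ) ≤ (n:ℝ) - i := by linarith
  have hkj : (0:ℝ) ≤ (k:ℝ) - j := by linarith
  have hCpos : 0 < C := by simp only [hC]; positivity
  have hDpos : 0 < D := by simp only [hD]; linarith
  have hCA : C ≤ A := by
    have : (i:ℝ) ≤ lam * i := by nlinarith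
    simp only [hA, hC]; linarith
  have hDB : D ≤ B := by
    have : ((n:ℝ) - i) ≤ lam * ((n:ℝ) - i) := by nlinarith
    simp only [hB, hD]; linarith
  have hApos : 0 < A := lt_of_lt_of_le hCpos hCA
  have hBpos : 0 < B := lt_of_lt_of_le hDpos hDB
  have ineq1 : Real.Gamma A * Real.Gamma (C + B) ≤
      Real.Gamma C * Real.Gamma (A + B) := gamma_mul_le_aux hCpos hCA hBpos
  have ineq2 : Real.Gamma B * Real.Gamma (D + C) ≤
      Real.Gamma D * Real.Gamma (B + C) := gamma_mul_le_aux hDpos hDB hCpos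
  have pA := Real.Gamma_pos_of_pos hApos
  have pB := Real.Gamma_pos_of_pos hBpos
  have pC := Real.Gamma_pos_of_pos hCpos
  have pD := Real.Gamma_pos_of_pos hDpos
  have pCB := Real.Gamma_pos_of_pos (show 0 < C + B by linarith)
  have pAB := Real.Gamma_pos_of_pos (show 0 < A + B by linarith)
  have pCD := Real.Gamma_pos_of_pos (show 0 < D + C by linarith)
  -- key : ΓA ΓB Γ(D+C) ≤ ΓC ΓD Γ(A+B)
  have key : Real.Gamma A * Real.Gamma B * Real.Gamma (D + C) ≤
      Real.Gamma C * Real.Gamma D * Real.Gamma (A + B) := by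
    have hBC : B + C = C + B := by ring
    rw [hBC] at ineq2
    have s1 : Real.Gamma A * (Real.Gamma B * Real.Gamma (D + C)) ≤
        Real.Gamma A * (Real.Gamma D * Real.Gamma (C + B)) :=
      mul_le_mul_of_nonneg_left ineq2 (le_of_lt pA)
    have s2 : Real.Gamma D * (Real.Gamma A * Real.Gamma (C + B)) ≤
        Real.Gamma D * (Real.Gamma C * Real.Gamma (A + B)) :=
      mul_le_mul_of_nonneg_left ineq1 (le_of_lt pD)
    nlinarith [s1, s2]
  -- Gamma values at naturals
  have gCD : Real.Gamma (D + C) = ((k + n + 1).factorial : ℝ) := by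
    have : D + C = ((k + n + 1 : ℕ) : ℝ) + 1 := by
      simp only [hC, hD]; push_cast; ring
    rw [this, Real.Gamma_nat_eq_factorial]
  have gC : Real.Gamma C = ((j + i).factorial : ℝ) := by
    have : C = ((j + i : ℕ) : ℝ) + 1 := by simp only [hC]; push_cast; ring
    rw [this, Real.Gamma_nat_eq_factorial]
  have gD : Real.Gamma D = (((k - j) + (n - i)).factorial : ℝ) := by
    have : D = (((k - j) + (n - i) : ℕ) : ℝ) + 1 := by
      simp only [hD]
      push_cast [Nat.cast_sub hj, Nat.cast_sub hi]
      ring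
    rw [this, Real.Gamma_nat_eq_factorial]
  -- Γ(A+B) = (K+1) Γ(K+1) where K = k + lam n
  set K : ℝ := (k:ℝ) + lam * n + 1 with hK
  have hKpos : 0 < K := by
    have : (0:ℝ) ≤ lam * n := by positivity
    simp only [hK]; positivity
  have gAB : Real.Gamma (A + B) = K * Real.Gamma K := by
    have e : A + B = K + 1 := by simp only [hA, hB, hK]; ring
    rw [e, Real.Gamma_add_one (ne_of_gt hKpos)]
  have pK := Real.Gamma_pos_of_pos hKpos
  -- Vandermonde
  have vdm : (k.choose j : ℝ) * (n.choose i : ℝ) ≤ ((k + n).choose (j + i) : ℝ) := by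
    exact_mod_cast choose_mul_choose_le_aux k j n i
  -- the factorial identity
  have fact_id : (((k + n).choose (j + i) : ℝ)) * ((j + i).factorial : ℝ) *
      ((((k - j) + (n - i)).factorial : ℝ)) = ((k + n).factorial : ℝ) := by
    have h1 : j + i ≤ k + n := Nat.add_le_add hj hi
    have h2 : (k + n) - (j + i) = (k - j) + (n - i) := by omega
    have := Nat.choose_mul_factorial_mul_factorial h1
    rw [h2] at this
    exact_mod_cast this
  have hKle : K ≤ lam * ((k:ℝ) + n + 1) := by
    have hk0 : (0:ℝ) ≤ k := Nat.cast_nonneg k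
    nlinarith
  -- main chain
  rw [le_div_iff₀ (mul_pos pA pB)]
  -- goal : LHS * (ΓA * ΓB) ≤ lam * ΓK
  have hmain : ((k.choose j : ℝ) * (n.choose i : ℝ)) * (Real.Gamma A * Real.Gamma B)
      * Real.Gamma (D + C) ≤ lam * Real.Gamma K * Real.Gamma (D + C) := by
    calc ((k.choose j : ℝ) * (n.choose i : ℝ)) * (Real.Gamma A * Real.Gamma B)
        * Real.Gamma (D + C)
        ≤ ((k.choose j : ℝ) * (n.choose i : ℝ)) *
            (Real.Gamma C * Real.Gamma D * Real.Gamma (A + B)) := by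
          have hnn : (0:ℝ) ≤ (k.choose j : ℝ) * (n.choose i : ℝ) := by positivity
          have := mul_le_mul_of_nonneg_left key hnn
          nlinarith [this]
      _ ≤ lam * Real.Gamma K * Real.Gamma (D + C) := by
          rw [gAB, gC, gD, gCD]
          have hfacs : ((k + n + 1).factorial : ℝ) =
              ((k:ℝ) + n + 1) * ((k + n).factorial : ℝ) := by
            have : (k + n + 1).factorial = (k + n + 1) * (k + n).factorial :=
              Nat.factorial_succ (k + n)
            rw [this]; push_cast; ring
          rw [hfacs]
          have step1 : ((k.choose j : ℝ) * (n.choose i : ℝ)) *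
              (((j + i).factorial : ℝ) * (((k - j) + (n - i)).factorial : ℝ)) ≤
              ((k + n).factorial : ℝ) := by
            calc ((k.choose j : ℝ) * (n.choose i : ℝ)) *
                (((j + i).factorial : ℝ) * (((k - j) + (n - i)).factorial : ℝ))
                ≤ ((k + n).choose (j + i) : ℝ) *
                  (((j + i).factorial : ℝ) * (((k - j) + (n - i)).factorial : ℝ)) := by
                  apply mul_le_mul_of_nonneg_right vdm (by positivity)
              _ = ((k + n).factorial : ℝ) := by rw [← fact_id]; ring
          have hfpos : (0:ℝ) < ((k + n).factorial : ℝ) := by positivity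
          nlinarith [step1, mul_le_mul_of_nonneg_right hKle (le_of_lt pK),
            mul_le_mul_of_nonneg_right step1 (mul_pos hKpos pK).le]
  have := le_of_mul_le_mul_right (by linarith [hmain] :
    ((k.choose j : ℝ) * (n.choose i : ℝ)) * (Real.Gamma A * Real.Gamma B)
      * Real.Gamma (D + C) ≤ lam * Real.Gamma K * Real.Gamma (D + C)) pCD
  linarith
end

section
/- For every real λ ≥ 1 and natural numbers k, n, j ≤ k, i ≤ n, the quantity (k + n + 1) · C(k + n, j + i) is at most (k + λn + 1) · C(k + λn, j + λi), where C denotes the generalized binomial coefficient defined via Gamma functions. -/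
open Real

noncomputable def betaR (a b : ℝ) : ℝ := ∫ t in (0:ℝ)..1, t ^ a * (1 - t) ^ b

lemma betaR_eq (a b : ℝ) (ha : 0 ≤ a) (hb : 0 ≤ b) :
    Real.Gamma (a + 1) * Real.Gamma (b + 1) = Real.Gamma (a + b + 2) * betaR a b := by
  have h := Complex.Gamma_mul_Gamma_eq_betaIntegral (s := (a : ℂ) + 1) (t := (b : ℂ) + 1)
    (by simp; linarith) (by simp; linarith)
  have hbeta : Complex.betaIntegral ((a : ℂ) + 1) ((b : ℂ) + 1) = ((betaR a b : ℝ) : ℂ) := by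
    rw [Complex.betaIntegral, betaR, ← intervalIntegral.integral_ofReal]
    refine intervalIntegral.integral_congr fun x hx => ?_
    rw [Set.uIcc_of_le (by norm_num)] at hx
    push_cast
    rw [add_sub_cancel_right, add_sub_cancel_right,
      ← Complex.ofReal_cpow hx.1, ← Complex.ofReal_one, ← Complex.ofReal_sub,
      ← Complex.ofReal_cpow (by linarith [hx.2])]
  rw [hbeta] at h
  have h2 : ((a : ℂ) + 1) + ((b : ℂ) + 1) = ((a + b + 2 : ℝ) : ℂ) := by push_cast; ring
  rw [h2] at h
  have ha1 : ((a : ℂ) + 1) = ((a + 1 : ℝ) : ℂ) := by push_cast; ring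
  have hb1 : ((b : ℂ) + 1) = ((b + 1 : ℝ) : ℂ) := by push_cast; ring
  rw [ha1, hb1, Complex.Gamma_ofReal, Complex.Gamma_ofReal, Complex.Gamma_ofReal] at h
  exact_mod_cast h

lemma betaR_pos (a b : ℝ) (ha : 0 ≤ a) (hb : 0 ≤ b) : 0 < betaR a b := by
  apply intervalIntegral.intervalIntegral_pos_of_pos_on
  · exact ((Real.continuous_rpow_const ha).mul
      ((Real.continuous_rpow_const hb).comp (continuous_const.sub continuous_id))).intervalIntegrable 0 1
  · intro x hx
    exact mul_pos (Real.rpow_pos_of_pos hx.1 a) (Real.rpow_pos_of_pos (by linarith [hx.2]) b)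
  · norm_num

lemma key (a b : ℝ) (ha : 0 ≤ a) (hb : 0 ≤ b) :
    (a + b + 1) * (Real.Gamma (a + b + 1) / (Real.Gamma (a + 1) * Real.Gamma (b + 1))) =
      1 / betaR a b := by
  have h1 : Real.Gamma (a + b + 2) = (a + b + 1) * Real.Gamma (a + b + 1) := by
    have := Real.Gamma_add_one (s := a + b + 1) (by positivity)
    rw [← this]; ring_nf
  have h2 := betaR_eq a b ha hb
  have hga : 0 < Real.Gamma (a + 1) := Real.Gamma_pos_of_pos (by linarith)
  have hgb : 0 < Real.Gamma (b + 1) := Real.Gamma_pos_of_pos (by linarith)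
  have hB := betaR_pos a b ha hb
  rw [h1] at h2
  field_simp
  linarith [h2]

theorem generalized_binom_monotone_in_lambda (lam : ℝ) (hlam : 1 ≤ lam)
    (k n j i : ℕ) (hj : j ≤ k) (hi : i ≤ n) :
    ((k : ℝ) + n + 1) *
        (Real.Gamma ((k : ℝ) + n + 1) /
          (Real.Gamma ((j : ℝ) + i + 1) *
            Real.Gamma (((k : ℝ) - j) + ((n : ℝ) - i) + 1))) ≤
      ((k : ℝ) + lam * n + 1) *
        (Real.Gamma ((k : ℝ) + lam * n + 1) /
          (Real.Gamma ((j : ℝ) + lam * i + 1) *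
            Real.Gamma (((k : ℝ) - j) + lam * ((n : ℝ) - i) + 1))) := by
  have hjk : (j : ℝ) ≤ (k : ℝ) := by exact_mod_cast hj
  have hin : (i : ℝ) ≤ (n : ℝ) := by exact_mod_cast hi
  set a1 : ℝ := (j : ℝ) + i with ha1def
  set b1 : ℝ := ((k : ℝ) - j) + ((n : ℝ) - i) with hb1def
  set a2 : ℝ := (j : ℝ) + lam * i with ha2def
  set b2 : ℝ := ((k : ℝ) - j) + lam * ((n : ℝ) - i) with hb2def
  have ha1 : 0 ≤ a1 := by positivity
  have hb1 : 0 ≤ b1 := by rw [hb1def]; nlinarith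
  have ha2 : 0 ≤ a2 := by rw [ha2def]; nlinarith [Nat.cast_nonneg (α := ℝ) i, Nat.cast_nonneg (α := ℝ) j]
  have hb2 : 0 ≤ b2 := by rw [hb2def]; nlinarith
  have e1 : (k : ℝ) + n = a1 + b1 := by rw [ha1def, hb1def]; ring
  have e2 : (k : ℝ) + lam * n = a2 + b2 := by rw [ha2def, hb2def]; ring
  rw [e1, e2, key a1 b1 ha1 hb1, key a2 b2 ha2 hb2]
  have hdom : betaR a2 b2 ≤ betaR a1 b1 := by
    apply intervalIntegral.integral_mono_on (by norm_num)
    · exact ((Real.continuous_rpow_const ha2).mul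
        ((Real.continuous_rpow_const hb2).comp (continuous_const.sub continuous_id))).intervalIntegrable 0 1
    · exact ((Real.continuous_rpow_const ha1).mul
        ((Real.continuous_rpow_const hb1).comp (continuous_const.sub continuous_id))).intervalIntegrable 0 1
    · intro x hx
      have h1x : (0:ℝ) ≤ 1 - x := by linarith [hx.2]
      refine mul_le_mul ?_ ?_ (Real.rpow_nonneg h1x _) (Real.rpow_nonneg hx.1 _)
      · exact Real.rpow_le_rpow_of_exponent_ge' hx.1 hx.2 ha1 (by rw [ha1def, ha2def]; nlinarith [Nat.cast_nonneg (α := ℝ) i])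
      · exact Real.rpow_le_rpow_of_exponent_ge' h1x (by linarith [hx.1]) hb1 (by rw [hb1def, hb2def]; nlinarith)
  exact one_div_le_one_div_of_le (betaR_pos a2 b2 ha2 hb2) hdom
end

section
/- Let λ > 1 and define a₀ = 1 and a_k = (λ(k−1))!/(λk)! = Γ(λ(k−1)+1)/Γ(λk+1) for k ≥ 1. Then the sequence (a_k) is positive and nonincreasing, Σ_{k≥1} a_k < ∞, and for every p ≥ 1 one has p·a_p + Σ_{k>p} a_k ≤ (λ/(λ−1) + 1)·p·a_p. -/
open Real

lemma gamma_spread {a b d : ℝ} (ha : 0 < a) (hab : a ≤ b) (hd : 0 ≤ d) :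
    Gamma (a + d) * Gamma b ≤ Gamma a * Gamma (b + d) := by
  rcases eq_or_lt_of_le hd with rfl | hd
  · simp [mul_comm]
  have hb : 0 < b := lt_of_lt_of_le ha hab
  have had : 0 < a + d := by linarith
  have hbd : 0 < b + d := by linarith
  set f : ℝ → ℝ := Real.log ∘ Real.Gamma with hf
  have hcv := Real.convexOn_log_Gamma
  have key : f (a + d) - f a ≤ f (b + d) - f b := by
    rcases eq_or_lt_of_le hab with rfl | hab
    · exact le_refl _
    have h1 : (f (a + d) - f a) / (a + d - a) ≤ (f (b + d) - f a) / (b + d - a) :=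
      hcv.secant_mono (Set.mem_Ioi.2 ha) (Set.mem_Ioi.2 had) (Set.mem_Ioi.2 hbd)
        (by linarith) (by linarith) (by linarith)
    have h2 : (f a - f (b + d)) / (a - (b + d)) ≤ (f b - f (b + d)) / (b - (b + d)) :=
      hcv.secant_mono (Set.mem_Ioi.2 hbd) (Set.mem_Ioi.2 ha) (Set.mem_Ioi.2 hb)
        (by linarith) (by linarith) hab.le
    have e2 : (f a - f (b + d)) / (a - (b + d)) = (f (b + d) - f a) / (b + d - a) := by
      rw [← neg_div_neg_eq]; ring_nf
    rw [e2] at h2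
    have e3 : (f b - f (b + d)) / (b - (b + d)) = (f (b + d) - f b) / d := by
      rw [← neg_div_neg_eq]; ring_nf
    rw [e3] at h2
    have hh : (f (a + d) - f a) / d ≤ (f (b + d) - f b) / d := by
      have : a + d - a = d := by ring
      rw [this] at h1; linarith
    have := (div_le_div_iff_of_pos_right hd).1 hh
    linarith [this]
  have hexp : Gamma (a+d) * Gamma b = Real.exp (f (a+d) + f b) := by
    rw [Real.exp_add]
    simp only [hf, Function.comp_apply]
    rw [Real.exp_log (Gamma_pos_of_pos had), Real.exp_log (Gamma_pos_of_pos hb)]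
  have hexp2 : Gamma a * Gamma (b+d) = Real.exp (f a + f (b+d)) := by
    rw [Real.exp_add]
    simp only [hf, Function.comp_apply]
    rw [Real.exp_log (Gamma_pos_of_pos ha), Real.exp_log (Gamma_pos_of_pos hbd)]
  rw [hexp, hexp2]
  exact Real.exp_le_exp.2 (by linarith)

lemma gamma_tele {lam x : ℝ} (hlam : 1 < lam) (hx : 0 < x) :
    Gamma x / Gamma (x + lam) =
      Gamma x / Gamma (x + (lam-1)) / (lam-1) - Gamma (x+1) / Gamma ((x+1) + (lam-1)) / (lam-1) := by
  have h1 : Gamma (x+1) = x * Gamma x := Real.Gamma_add_one hx.ne'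
  have hxl : 0 < x + (lam-1) := by linarith
  have h2 : Gamma ((x + (lam-1)) + 1) = (x+(lam-1)) * Gamma (x+(lam-1)) :=
    Real.Gamma_add_one hxl.ne'
  have e2 : (x+1) + (lam-1) = x + lam := by ring
  have e : x + lam = (x + (lam-1)) + 1 := by ring
  rw [e2, e, h2, h1]
  have g1 : Gamma x ≠ 0 := (Gamma_pos_of_pos hx).ne'
  have g2 : Gamma (x+(lam-1)) ≠ 0 := (Gamma_pos_of_pos hxl).ne'
  have g3 : x + (lam - 1) ≠ 0 := hxl.ne'
  have g4 : lam - 1 ≠ 0 := by intro h; rw [sub_eq_zero] at h; exact absurd h.symm hlam.ne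
  field_simp
  ring

theorem gevrey_sequence_properties (lam : ℝ) (hlam : 1 < lam) :
    let a : ℕ → ℝ := fun k =>
      if k = 0 then 1 else Real.Gamma (lam * ((k : ℝ) - 1) + 1) / Real.Gamma (lam * k + 1)
    (∀ k : ℕ, 0 < a k) ∧
    (∀ k : ℕ, a (k + 1) ≤ a k) ∧
    Summable (fun k : ℕ => a (k + 1)) ∧
    ∀ p : ℕ, 1 ≤ p →
      (p : ℝ) * a p + ∑' k : ℕ, a (p + 1 + k) ≤ (lam / (lam - 1) + 1) * p * a p := by
  intro a
  have hlam0 : (0:ℝ) < lam := by linarith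
  have hl1 : (0:ℝ) < lam - 1 := by linarith
  -- formula for a at nonzero index
  have ha : ∀ k : ℕ, k ≠ 0 → a k = Gamma (lam * ((k:ℝ) - 1) + 1) / Gamma (lam * k + 1) := by
    intro k hk; simp only [a, if_neg hk]
  have harg : ∀ k : ℕ, k ≠ 0 → 0 < lam * ((k:ℝ) - 1) + 1 := by
    intro k hk
    have h1 : (1:ℝ) ≤ (k:ℝ) := by exact_mod_cast Nat.one_le_iff_ne_zero.2 hk
    nlinarith
  have harg2 : ∀ k : ℕ, 0 < lam * (k:ℝ) + 1 := by
    intro k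
    have : (0:ℝ) ≤ (k:ℝ) := Nat.cast_nonneg k
    nlinarith
  have hpos : ∀ k : ℕ, 0 < a k := by
    intro k
    by_cases hk : k = 0
    · simp [a, hk]
    · rw [ha k hk]
      exact div_pos (Gamma_pos_of_pos (harg k hk)) (Gamma_pos_of_pos (harg2 k))
  -- G antitone
  have hG : ∀ x y : ℝ, 0 < x → x ≤ y → Gamma y / Gamma (y + lam) ≤ Gamma x / Gamma (x + lam) := by
    intro x y hx hxy
    have hy : 0 < y := lt_of_lt_of_le hx hxy
    have h := gamma_spread hx hxy hlam0.le
    rw [div_le_div_iff₀ (Gamma_pos_of_pos (by linarith)) (Gamma_pos_of_pos (by linarith))]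
    nlinarith [h]
  -- 1 ≤ Gamma (lam + 1)
  have hGam1 : 1 ≤ Gamma (lam + 1) := by
    have hcv := Real.convexOn_log_Gamma
    have hmem1 : (1:ℝ) ∈ Set.Ioi (0:ℝ) := by norm_num
    have hmem2 : lam + 1 ∈ Set.Ioi (0:ℝ) := by simp; linarith
    have ht1 : (0:ℝ) ≤ 1 - 1/lam := by
      have : 1/lam ≤ 1 := by rw [div_le_one hlam0]; linarith
      linarith
    have ht2 : (0:ℝ) ≤ 1/lam := by positivity
    have ht3 : (1 - 1/lam) + 1/lam = 1 := by ring
    have h := hcv.2 hmem1 hmem2 ht1 ht2 ht3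
    have hc : (1 - 1/lam) • (1:ℝ) + (1/lam) • (lam + 1) = 2 := by
      field_simp
      ring_nf; rw [mul_inv_cancel₀ hlam0.ne']; ring
    rw [hc] at h
    simp only [Function.comp_apply, smul_eq_mul, Real.Gamma_two, Real.Gamma_one,
      Real.log_one, mul_zero, zero_add] at h
    have hlog : 0 ≤ Real.log (Gamma (lam + 1)) := by
      rcases le_or_gt 0 (Real.log (Gamma (lam + 1))) with h' | h'
      · exact h'
      · exfalso
        have : (1/lam) * Real.log (Gamma (lam+1)) < 0 :=
          mul_neg_of_pos_of_neg (by positivity) h'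
        linarith
    calc (1:ℝ) = Real.exp 0 := by rw [Real.exp_zero]
      _ ≤ Real.exp (Real.log (Gamma (lam+1))) := Real.exp_le_exp.2 hlog
      _ = Gamma (lam + 1) := Real.exp_log (Gamma_pos_of_pos (by linarith))
  -- monotonicity
  have hmono : ∀ k : ℕ, a (k + 1) ≤ a k := by
    intro k
    cases k with
    | zero =>
      rw [ha 1 one_ne_zero]
      simp only [a, if_pos rfl]
      have e1 : lam * (((1:ℕ):ℝ) - 1) + 1 = 1 := by push_cast; ring
      have e2 : lam * ((1:ℕ):ℝ) + 1 = lam + 1 := by push_cast; ring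
      rw [e1, e2, Real.Gamma_one]
      rw [div_le_one (Gamma_pos_of_pos (by linarith))]
      exact hGam1
    | succ n =>
      rw [ha (n+1+1) (by omega), ha (n+1) (by omega)]
      have e1 : lam * (((n+1+1:ℕ):ℝ) - 1) + 1 = lam * ((n:ℝ)+1) + 1 := by push_cast; ring
      have e2 : lam * ((n+1+1:ℕ):ℝ) + 1 = (lam * ((n:ℝ)+1) + 1) + lam := by push_cast; ring
      have e3 : lam * (((n+1:ℕ):ℝ) - 1) + 1 = lam * (n:ℝ) + 1 := by push_cast; ring
      have e4 : lam * ((n+1:ℕ):ℝ) + 1 = (lam * (n:ℝ) + 1) + lam := by push_cast; ring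
      rw [e1, e2, e3, e4]
      apply hG
      · have : (0:ℝ) ≤ (n:ℝ) := Nat.cast_nonneg n; nlinarith
      · have : (0:ℝ) ≤ (n:ℝ) := Nat.cast_nonneg n; nlinarith
  -- key partial-sum bound
  have key : ∀ p : ℕ, 1 ≤ p → ∀ N : ℕ,
      ∑ k ∈ Finset.range N, a (p+1+k) ≤ lam/(lam-1) * p * a p := by
    intro p hp N
    have hp1 : (1:ℝ) ≤ (p:ℝ) := by exact_mod_cast hp
    set x₀ : ℝ := lam * p + 1 with hx₀
    have hx₀pos : 0 < x₀ := by nlinarith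
    set F : ℕ → ℝ := fun k => Gamma (x₀ + k) / Gamma ((x₀ + k) + (lam-1)) / (lam-1) with hF
    have hxk : ∀ k : ℕ, 0 < x₀ + k := by
      intro k; have : (0:ℝ) ≤ (k:ℝ) := Nat.cast_nonneg k; linarith
    have hFnonneg : ∀ k, 0 ≤ F k := by
      intro k
      have h1 := Gamma_pos_of_pos (hxk k)
      have h2 := Gamma_pos_of_pos (show 0 < (x₀ + k) + (lam - 1) by have := hxk k; linarith)
      positivity
    have step1 : ∀ k : ℕ, a (p+1+k) ≤ F k - F (k+1) := by
      intro k
      have hkc : (0:ℝ) ≤ (k:ℝ) := Nat.cast_nonneg k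
      have e1 : a (p+1+k) = Gamma (lam*((p:ℝ)+k)+1) / Gamma ((lam*((p:ℝ)+k)+1) + lam) := by
        rw [ha (p+1+k) (by omega)]
        have c1 : lam * (((p+1+k:ℕ):ℝ) - 1) + 1 = lam*((p:ℝ)+k)+1 := by push_cast; ring
        have c2 : lam * ((p+1+k:ℕ):ℝ) + 1 = (lam*((p:ℝ)+k)+1) + lam := by push_cast; ring
        rw [c1, c2]
      have hle : Gamma (lam*((p:ℝ)+k)+1) / Gamma ((lam*((p:ℝ)+k)+1) + lam)
          ≤ Gamma (x₀ + k) / Gamma ((x₀ + k) + lam) := by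
        apply hG
        · exact hxk k
        · rw [hx₀]; nlinarith
      have htele := gamma_tele hlam (hxk k)
      have eF : F k - F (k+1) =
          Gamma (x₀+k) / Gamma ((x₀+k) + (lam-1)) / (lam-1)
            - Gamma ((x₀+k)+1) / Gamma (((x₀+k)+1) + (lam-1)) / (lam-1) := by
        simp only [hF]
        push_cast
        ring_nf
      rw [e1, eF, ← htele]
      exact hle
    calc ∑ k ∈ Finset.range N, a (p+1+k)
        ≤ ∑ k ∈ Finset.range N, (F k - F (k+1)) := Finset.sum_le_sum (fun k _ => step1 k)
      _ = F 0 - F N := Finset.sum_range_sub' F N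
      _ ≤ F 0 := by linarith [hFnonneg N]
      _ ≤ lam/(lam-1) * p * a p := by
          rw [ha p (by omega)]
          have hA := Gamma_pos_of_pos (harg p (by omega))
          have hB := Gamma_pos_of_pos (harg2 p)
          have hCpos : 0 < (x₀ + ((0:ℕ):ℝ)) + (lam - 1) := by
            have := hxk 0; linarith
          have hC := Gamma_pos_of_pos hCpos
          have hF0 : F 0 = Gamma x₀ / Gamma (x₀ + (lam-1)) / (lam-1) := by
            simp [hF]
          -- spread inequality : Gamma(lam p) * Gamma(lam p + 1) ≤ Gamma(lam(p-1)+1) * Gamma(lam p + lam)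
          have hsp := gamma_spread (harg p (by omega))
            (show lam * ((p:ℝ)-1) + 1 ≤ x₀ by rw [hx₀]; nlinarith)
            (le_of_lt hl1)
          have c1 : lam * ((p:ℝ)-1) + 1 + (lam-1) = lam * p := by ring
          rw [c1] at hsp
          -- hsp : Gamma (lam p) * Gamma x₀ ≤ Gamma (lam*(p-1)+1) * Gamma (x₀ + (lam-1))
          have hrec : Gamma x₀ = lam * p * Gamma (lam * p) := by
            rw [hx₀]
            exact Real.Gamma_add_one (by nlinarith)
          have hDpos : 0 < Gamma (lam * (p:ℝ)) := Gamma_pos_of_pos (by nlinarith)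
          have hC2 : 0 < Gamma (x₀ + (lam - 1)) := Gamma_pos_of_pos (by linarith [hx₀pos])
          rw [hF0, div_div, div_le_iff₀ (by positivity)]
          have expand : lam / (lam - 1) * p * (Gamma (lam * ((p:ℝ) - 1) + 1) / Gamma (lam * p + 1)) *
              (Gamma (x₀ + (lam - 1)) * (lam - 1))
              = (lam * p * (Gamma (lam * ((p:ℝ)-1)+1) * Gamma (x₀ + (lam-1)))) / Gamma (lam*p+1) := by
            field_simp
          rw [expand]
          rw [le_div_iff₀ hB]
          have hx₀B : Gamma (lam * (p:ℝ) + 1) = Gamma x₀ := by rw [hx₀]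
          rw [hx₀B]
          calc Gamma x₀ * Gamma x₀ = lam * p * (Gamma (lam * p) * Gamma x₀) := by
                rw [hrec]; ring
            _ ≤ lam * p * (Gamma (lam * ((p:ℝ)-1)+1) * Gamma (x₀ + (lam-1))) := by
                apply mul_le_mul_of_nonneg_left hsp (by nlinarith)
  -- summability
  have hsum : Summable (fun k : ℕ => a (k + 1)) := by
    apply summable_of_sum_range_le (c := a 1 + lam/(lam-1) * 1 * a 1)
      (fun n => (hpos _).le)
    intro n
    cases n with
    | zero =>
      simp only [Finset.range_zero, Finset.sum_empty]
      have h1 := hpos 1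
      have : 0 < lam/(lam-1) := by positivity
      nlinarith
    | succ m =>
      rw [Finset.sum_range_succ']
      have hk := key 1 le_rfl m
      have ecast : ((1:ℕ):ℝ) = 1 := by norm_num
      rw [ecast, ] at hk
      have esum : ∑ i ∈ Finset.range m, a (i + 1 + 1) = ∑ k ∈ Finset.range m, a (1+1+k) := by
        apply Finset.sum_congr rfl
        intro i _
        congr 1
        omega
      rw [esum]
      have : lam / (lam-1) * 1 * a 1 = lam/(lam-1) * a 1 := by ring
      rw [this] at hk ⊢
      linarith
  refine ⟨hpos, hmono, hsum, ?_⟩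
  intro p hp
  have htsum : ∑' k : ℕ, a (p+1+k) ≤ lam/(lam-1) * p * a p :=
    Real.tsum_le_of_sum_range_le (fun k => (hpos _).le) (key p hp)
  nlinarith [htsum]
end

section
/- (Algebra of mixed Gevrey bounds.) Let λ ≥ 1, μ > 2, R, R' > 0, and let C₁, C₂ > 0. Suppose two doubly-indexed families of reals (d₁)_{n}^{k} and (d₂)_{n}^{k}, for k ≤ k₀ and n ≤ n₀, satisfy |dᵢ(n, k)| ≤ Cᵢ (λn + k)!/(R^k R'^{λn} (λn + k + 1)^μ). Define the Leibniz product π(d₁, d₂)(n, k) := Σ_{0≤j≤k} Σ_{0≤i≤n} (k choose j)(n choose i) d₁(i, j) d₂(n−i, k−j). Then |π(d₁, d₂)(n, k)| ≤ K C₁ C₂ (λn + k)!/(R^k R'^{λn} (λn + k + 1)^μ) for all k ≤ k₀, n ≤ n₀, where K = 2λ·2^{μ}·Σ_{j,i ≥ 0} 1/(λi + j + 1)^μ. -/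
open Finset Real
open MeasureTheory intervalIntegral

noncomputable def rBeta (x y : ℝ) : ℝ := ∫ t in (0:ℝ)..1, t ^ (x-1) * (1-t) ^ (y-1)

lemma rBeta_eq_complex (x y : ℝ) (hx : 0 < x) (hy : 0 < y) :
    Complex.betaIntegral x y = ((rBeta x y : ℝ) : ℂ) := by
  rw [rBeta, ← intervalIntegral.integral_ofReal]
  apply intervalIntegral.integral_congr
  intro t ht
  rw [Set.uIcc_of_le (zero_le_one)] at ht
  simp only []
  rw [Complex.ofReal_mul, Complex.ofReal_cpow ht.1, Complex.ofReal_cpow (by linarith [ht.2] : (0:ℝ) ≤ 1 - t)]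
  push_cast
  ring

lemma Gamma_mul_Gamma_eq_rBeta {x y : ℝ} (hx : 0 < x) (hy : 0 < y) :
    Real.Gamma x * Real.Gamma y = Real.Gamma (x + y) * rBeta x y := by
  have h := Complex.Gamma_mul_Gamma_eq_betaIntegral (s := (x:ℂ)) (t := (y:ℂ))
    (by simpa using hx) (by simpa using hy)
  rw [rBeta_eq_complex x y hx hy] at h
  rw [← Complex.ofReal_inj]
  push_cast [← Complex.Gamma_ofReal]
  simpa using h

lemma rBeta_integrableOn {x y : ℝ} (hx : 0 < x) (hy : 0 < y) :
    IntegrableOn (fun t : ℝ => t ^ (x-1) * (1-t) ^ (y-1)) (Set.Ioc 0 1) := by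
  have hc := Complex.betaIntegral_convergent (u := (x:ℂ)) (v := (y:ℂ))
    (by simpa using hx) (by simpa using hy)
  have hc' : IntegrableOn (fun t : ℝ => (t:ℂ) ^ ((x:ℂ)-1) * (1-(t:ℂ)) ^ ((y:ℂ)-1))
      (Set.Ioc 0 1) := by
    rw [intervalIntegrable_iff_integrableOn_Ioc_of_le zero_le_one] at hc
    exact hc
  have hre : IntegrableOn (fun t : ℝ => ((t:ℂ) ^ ((x:ℂ)-1) * (1-(t:ℂ)) ^ ((y:ℂ)-1)).re)
      (Set.Ioc 0 1) := hc'.re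
  apply hre.congr_fun ?_ measurableSet_Ioc
  intro t ht
  simp only []
  rw [show ((x:ℂ)-1) = ((x-1:ℝ):ℂ) by push_cast; ring,
    show ((1:ℂ)-(t:ℂ)) = ((1-t:ℝ):ℂ) by push_cast; ring,
    show ((y:ℂ)-1) = ((y-1:ℝ):ℂ) by push_cast; ring,
    ← Complex.ofReal_cpow ht.1.le, ← Complex.ofReal_cpow (by linarith [ht.2] : (0:ℝ) ≤ 1 - t),
    ← Complex.ofReal_mul, Complex.ofReal_re]

lemma rBeta_mono_left {x x' y : ℝ} (hx : 0 < x) (hxx : x ≤ x') (hy : 0 < y) :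
    rBeta x' y ≤ rBeta x y := by
  rw [rBeta, rBeta, intervalIntegral.integral_of_le zero_le_one,
    intervalIntegral.integral_of_le zero_le_one]
  apply MeasureTheory.setIntegral_mono_on (rBeta_integrableOn (lt_of_lt_of_le hx hxx) hy)
    (rBeta_integrableOn hx hy) measurableSet_Ioc
  intro t ht
  apply mul_le_mul_of_nonneg_right _ (Real.rpow_nonneg (by linarith [ht.2]) _)
  exact Real.rpow_le_rpow_of_exponent_ge ht.1 ht.2 (by linarith)

lemma rBeta_symm {x y : ℝ} (hx : 0 < x) (hy : 0 < y) : rBeta x y = rBeta y x := by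
  have h1 := Gamma_mul_Gamma_eq_rBeta hx hy
  have h2 := Gamma_mul_Gamma_eq_rBeta hy hx
  have hpos : 0 < Real.Gamma (x + y) := Real.Gamma_pos_of_pos (by linarith)
  rw [add_comm] at h2
  nlinarith [h1, h2]

lemma rBeta_mono {s t a b : ℝ} (hs : 0 < s) (ht : 0 < t) (hsa : s ≤ a) (htb : t ≤ b) :
    rBeta a b ≤ rBeta s t := by
  calc rBeta a b ≤ rBeta s b := rBeta_mono_left hs hsa (lt_of_lt_of_le ht htb)
    _ = rBeta b s := rBeta_symm hs (lt_of_lt_of_le ht htb)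
    _ ≤ rBeta t s := rBeta_mono_left ht htb hs
    _ = rBeta s t := rBeta_symm ht hs

lemma gamma_ratio {s t a b : ℝ} (hs : 0 ≤ s) (ht : 0 ≤ t) (hsa : s ≤ a) (htb : t ≤ b) :
    Real.Gamma (a+1) * Real.Gamma (b+1) * ((s+t+1) * Real.Gamma (s+t+1)) ≤
      (a+b+1) * Real.Gamma (a+b+1) * (Real.Gamma (s+1) * Real.Gamma (t+1)) := by
  have hΓ : ∀ u : ℝ, 0 ≤ u → Real.Gamma (u+1) * Real.Gamma (u+1) ≥ 0 := by
    intro u hu; positivity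
  have h1 : Real.Gamma (a+1) * Real.Gamma (b+1)
      = (a+b+1) * Real.Gamma (a+b+1) * rBeta (a+1) (b+1) := by
    rw [Gamma_mul_Gamma_eq_rBeta (by linarith) (by linarith),
      show a+1+(b+1) = (a+b+1)+1 by ring, Real.Gamma_add_one (ne_of_gt (by linarith))]
  have h2 : Real.Gamma (s+1) * Real.Gamma (t+1)
      = (s+t+1) * Real.Gamma (s+t+1) * rBeta (s+1) (t+1) := by
    rw [Gamma_mul_Gamma_eq_rBeta (by linarith) (by linarith),
      show s+1+(t+1) = (s+t+1)+1 by ring, Real.Gamma_add_one (ne_of_gt (by linarith))]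
  have hmono : rBeta (a+1) (b+1) ≤ rBeta (s+1) (t+1) :=
    rBeta_mono (by linarith) (by linarith) (by linarith) (by linarith)
  have hX : (0:ℝ) ≤ (a+b+1) * Real.Gamma (a+b+1) * ((s+t+1) * Real.Gamma (s+t+1)) := by
    have h3 : (0:ℝ) < a+b+1 := by linarith
    have h5 : (0:ℝ) < s+t+1 := by linarith
    have h4 := Real.Gamma_pos_of_pos h3
    have h6 := Real.Gamma_pos_of_pos h5
    exact le_of_lt (mul_pos (mul_pos h3 h4) (mul_pos h5 h6))
  calc Real.Gamma (a+1) * Real.Gamma (b+1) * ((s+t+1) * Real.Gamma (s+t+1))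
      = ((a+b+1) * Real.Gamma (a+b+1) * ((s+t+1) * Real.Gamma (s+t+1))) * rBeta (a+1) (b+1) := by
        rw [h1]; ring
    _ ≤ ((a+b+1) * Real.Gamma (a+b+1) * ((s+t+1) * Real.Gamma (s+t+1))) * rBeta (s+1) (t+1) :=
        mul_le_mul_of_nonneg_left hmono hX
    _ = (a+b+1) * Real.Gamma (a+b+1) * (Real.Gamma (s+1) * Real.Gamma (t+1)) := by
        rw [h2]; ring

lemma key_real {s t a b C lam : ℝ} (hs : 0 ≤ s) (ht : 0 ≤ t) (hsa : s ≤ a) (htb : t ≤ b)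
    (hC : 0 ≤ C) (hCP : C * (Real.Gamma (s+1) * Real.Gamma (t+1)) ≤ Real.Gamma (s+t+1))
    (hab : a + b + 1 ≤ lam * (s+t+1)) :
    C * (Real.Gamma (a+1) * Real.Gamma (b+1)) ≤ lam * Real.Gamma (a+b+1) := by
  have hGst : 0 < Real.Gamma (s+t+1) := Real.Gamma_pos_of_pos (by linarith)
  have hGab : 0 < Real.Gamma (a+b+1) := Real.Gamma_pos_of_pos (by linarith)
  have hQ : 0 < (s+t+1) * Real.Gamma (s+t+1) := mul_pos (by linarith) hGst
  have h := gamma_ratio hs ht hsa htb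
  apply le_of_mul_le_mul_right _ hQ
  calc C * (Real.Gamma (a+1) * Real.Gamma (b+1)) * ((s+t+1) * Real.Gamma (s+t+1))
      = C * (Real.Gamma (a+1) * Real.Gamma (b+1) * ((s+t+1) * Real.Gamma (s+t+1))) := by ring
    _ ≤ C * ((a+b+1) * Real.Gamma (a+b+1) * (Real.Gamma (s+1) * Real.Gamma (t+1))) :=
        mul_le_mul_of_nonneg_left h hC
    _ = (a+b+1) * Real.Gamma (a+b+1) * (C * (Real.Gamma (s+1) * Real.Gamma (t+1))) := by ring
    _ ≤ (a+b+1) * Real.Gamma (a+b+1) * Real.Gamma (s+t+1) := by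
        apply mul_le_mul_of_nonneg_left hCP
        have : (0:ℝ) ≤ a+b+1 := by linarith
        positivity
    _ ≤ (lam * (s+t+1)) * Real.Gamma (a+b+1) * Real.Gamma (s+t+1) := by
        apply mul_le_mul_of_nonneg_right (mul_le_mul_of_nonneg_right hab hGab.le) hGst.le
    _ = lam * Real.Gamma (a+b+1) * ((s+t+1) * Real.Gamma (s+t+1)) := by ring

lemma lemA {lam : ℝ} (hlam : 1 ≤ lam) {i n j k : ℕ} (hin : i ≤ n) (hjk : j ≤ k) :
    (k.choose j : ℝ) * (n.choose i : ℝ) *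
      (Real.Gamma (lam*i+j+1) * Real.Gamma (lam*((n:ℝ)-i)+((k:ℝ)-j)+1)) ≤
    lam * Real.Gamma (lam*n+k+1) := by
  have hi : (i:ℝ) ≤ n := Nat.cast_le.2 hin
  have hj : (j:ℝ) ≤ k := Nat.cast_le.2 hjk
  have hi0 : (0:ℝ) ≤ i := Nat.cast_nonneg i
  have hj0 : (0:ℝ) ≤ j := Nat.cast_nonneg j
  have hCP : (k.choose j : ℝ) * (n.choose i : ℝ) *
      (Real.Gamma (((i:ℝ)+j)+1) * Real.Gamma ((((n:ℝ)-i)+((k:ℝ)-j))+1)) ≤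
      Real.Gamma (((i:ℝ)+j)+(((n:ℝ)-i)+((k:ℝ)-j))+1) := by
    have hv : (k.choose j) * (n.choose i) ≤ (n+k).choose (i+j) := by
      rw [show n+k = k+n from add_comm n k, Nat.add_choose_eq]
      exact Finset.single_le_sum (f := fun p : ℕ × ℕ => k.choose p.1 * n.choose p.2)
        (fun p _ => Nat.zero_le _)
        (show (j, i) ∈ Finset.HasAntidiagonal.antidiagonal (i+j) from Finset.HasAntidiagonal.mem_antidiagonal.2 (add_comm j i))
    have e1 : ((i:ℝ)+j)+1 = (↑(i+j):ℝ)+1 := by push_cast; ring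
    have e2 : (((n:ℝ)-i)+((k:ℝ)-j))+1 = (↑(n+k-(i+j)):ℝ)+1 := by
      have h' : n+k-(i+j) = (n-i)+(k-j) := by omega
      rw [h', Nat.cast_add, Nat.cast_sub hin, Nat.cast_sub hjk]
    have e3 : ((i:ℝ)+j)+(((n:ℝ)-i)+((k:ℝ)-j))+1 = (↑(n+k):ℝ)+1 := by push_cast; ring
    rw [e1, e2, e3, Real.Gamma_nat_eq_factorial, Real.Gamma_nat_eq_factorial,
      Real.Gamma_nat_eq_factorial]
    have hle : i+j ≤ n+k := by omega
    calc (k.choose j : ℝ) * (n.choose i : ℝ) * (((i+j).factorial : ℝ) * ((n+k-(i+j)).factorial : ℝ))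
        ≤ ((n+k).choose (i+j) : ℝ) * (((i+j).factorial : ℝ) * ((n+k-(i+j)).factorial : ℝ)) := by
          apply mul_le_mul_of_nonneg_right _ (by positivity)
          exact_mod_cast Nat.cast_le.2 hv
      _ = ((n+k).factorial : ℝ) := by
          rw [Nat.cast_choose ℝ hle]
          field_simp
  have h := key_real (s := (i:ℝ)+j) (t := ((n:ℝ)-i)+((k:ℝ)-j))
    (a := lam*i+j) (b := lam*((n:ℝ)-i)+((k:ℝ)-j)) (lam := lam)
    (C := (k.choose j : ℝ) * (n.choose i : ℝ))
    (by positivity) (by linarith)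
    (by nlinarith [mul_nonneg (sub_nonneg.2 hlam) hi0])
    (by nlinarith [mul_nonneg (sub_nonneg.2 hlam) (sub_nonneg.2 hi)])
    (by positivity) hCP
    (by nlinarith [mul_nonneg (sub_nonneg.2 hlam) (by positivity : (0:ℝ) ≤ (k:ℝ)+1)])
  have e : lam*(i:ℝ)+j+(lam*((n:ℝ)-i)+((k:ℝ)-j))+1 = lam*n+k+1 := by ring
  rwa [e] at h

lemma sumS {lam mu : ℝ} (hlam : 1 ≤ lam) (hmu : 2 < mu) :
    Summable (fun p : ℕ × ℕ => 1 / (lam * p.1 + p.2 + 1) ^ mu) := by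
  have hq : 1 < mu/2 := by linarith
  have h1 : Summable (fun n : ℕ => 1 / ((n:ℝ)+1) ^ (mu/2)) := by
    have h0 := (Real.summable_one_div_nat_rpow (p := mu/2)).2 hq
    have h2 := (summable_nat_add_iff (f := fun n : ℕ => 1 / (n:ℝ) ^ (mu/2)) 1).2 h0
    apply h2.congr
    intro n
    push_cast
    ring_nf
  have hg := h1.mul_of_nonneg h1 (fun n => by positivity) (fun n => by positivity)
  have hle : ∀ p : ℕ × ℕ, 1 / (lam * p.1 + p.2 + 1) ^ mu ≤
      (1 / ((p.1:ℝ)+1) ^ (mu/2)) * (1 / ((p.2:ℝ)+1) ^ (mu/2)) := by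
    rintro ⟨i, j⟩
    simp only
    have hmu0 : (0:ℝ) < mu := by linarith
    have hi0 : (0:ℝ) ≤ i := Nat.cast_nonneg i
    have hj0 : (0:ℝ) ≤ j := Nat.cast_nonneg j
    have hkey : ((i:ℝ)+1) ^ (mu/2) * ((j:ℝ)+1) ^ (mu/2) ≤ (lam*i+j+1) ^ mu := by
      calc ((i:ℝ)+1) ^ (mu/2) * ((j:ℝ)+1) ^ (mu/2)
          = (((i:ℝ)+1) * ((j:ℝ)+1)) ^ (mu/2) := (Real.mul_rpow (by positivity) (by positivity)).symm
        _ ≤ (((i:ℝ)+j+1)^(2:ℕ)) ^ (mu/2) := by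
            apply Real.rpow_le_rpow (by positivity) _ (by positivity)
            nlinarith
        _ = ((i:ℝ)+j+1) ^ mu := by
            rw [← Real.rpow_natCast ((i:ℝ)+j+1) 2, ← Real.rpow_mul (by positivity)]
            congr 1
            push_cast
            ring
        _ ≤ (lam*i+j+1) ^ mu := by
            apply Real.rpow_le_rpow (by positivity) _ hmu0.le
            nlinarith [mul_nonneg (sub_nonneg.2 hlam) hi0]
    have hpos : (0:ℝ) < ((i:ℝ)+1) ^ (mu/2) * ((j:ℝ)+1) ^ (mu/2) := by positivity
    calc 1 / (lam*i+j+1) ^ mu ≤ 1 / (((i:ℝ)+1) ^ (mu/2) * ((j:ℝ)+1) ^ (mu/2)) :=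
          one_div_le_one_div_of_le hpos hkey
      _ = (1 / ((i:ℝ)+1) ^ (mu/2)) * (1 / ((j:ℝ)+1) ^ (mu/2)) := by rw [one_div_mul_one_div]
  exact Summable.of_nonneg_of_le (fun p => by positivity) hle hg


lemma termB {mu x y : ℝ} (hmu0 : 0 < mu) (hx : 0 ≤ x) (hy : 0 ≤ y) :
    1/((x+1)^mu * (y+1)^mu) ≤ 2^mu/(x+y+1)^mu * (1/(x+1)^mu + 1/(y+1)^mu) := by
  have haux : ∀ u v : ℝ, 0 ≤ u → 0 ≤ v → u ≤ v →
      1/((u+1)^mu * (v+1)^mu) ≤ 2^mu/(u+v+1)^mu * (1/(u+1)^mu) := by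
    intro u v hu hv huv
    have h2 : (u+v+1)^mu ≤ 2^mu * (v+1)^mu := by
      rw [← Real.mul_rpow (by norm_num) (by linarith)]
      exact Real.rpow_le_rpow (by linarith) (by linarith) hmu0.le
    have hvp : (0:ℝ) < (v+1)^mu := Real.rpow_pos_of_pos (by linarith) _
    have hsp : (0:ℝ) < (u+v+1)^mu := Real.rpow_pos_of_pos (by linarith) _
    have hup : (0:ℝ) < (u+1)^mu := Real.rpow_pos_of_pos (by linarith) _
    rw [div_mul_div_comm, div_le_div_iff₀ (by positivity) (by positivity)]
    nlinarith [mul_le_mul_of_nonneg_right h2 hup.le]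
  have hxp : (0:ℝ) < (x+1)^mu := Real.rpow_pos_of_pos (by linarith) _
  have hyp : (0:ℝ) < (y+1)^mu := Real.rpow_pos_of_pos (by linarith) _
  have hsp : (0:ℝ) < (x+y+1)^mu := Real.rpow_pos_of_pos (by linarith) _
  rcases le_total x y with h | h
  · calc 1/((x+1)^mu * (y+1)^mu) ≤ 2^mu/(x+y+1)^mu * (1/(x+1)^mu) := haux x y hx hy h
      _ ≤ 2^mu/(x+y+1)^mu * (1/(x+1)^mu + 1/(y+1)^mu) := by
          apply mul_le_mul_of_nonneg_left _ (by positivity)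
          have : (0:ℝ) ≤ 1/(y+1)^mu := by positivity
          linarith
  · have := haux y x hy hx h
    calc 1/((x+1)^mu * (y+1)^mu) = 1/((y+1)^mu * (x+1)^mu) := by ring_nf
      _ ≤ 2^mu/(y+x+1)^mu * (1/(y+1)^mu) := this
      _ ≤ 2^mu/(x+y+1)^mu * (1/(x+1)^mu + 1/(y+1)^mu) := by
          rw [show y+x+1 = x+y+1 by ring]
          apply mul_le_mul_of_nonneg_left _ (by positivity)
          have : (0:ℝ) ≤ 1/(x+1)^mu := by positivity
          linarith

lemma sum_recip_le {lam mu : ℝ} (hlam : 1 ≤ lam) (hmu : 2 < mu) (n k : ℕ) :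
    ∑ j ∈ Finset.range (k+1), ∑ i ∈ Finset.range (n+1), 1 / (lam*i+j+1)^mu ≤
    ∑' p : ℕ × ℕ, 1 / (lam * p.1 + p.2 + 1) ^ mu := by
  rw [Finset.sum_comm]
  rw [← Finset.sum_product' (s := Finset.range (n+1)) (t := Finset.range (k+1))
    (f := fun i j => 1 / (lam*i+j+1)^mu)]
  exact Summable.sum_le_tsum _ (fun p _ => by positivity) (sumS hlam hmu)

lemma sum_recip_le' {lam mu : ℝ} (hlam : 1 ≤ lam) (hmu : 2 < mu) (n k : ℕ) :
    ∑ j ∈ Finset.range (k+1), ∑ i ∈ Finset.range (n+1),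
        1 / (lam*((n:ℝ)-i)+((k:ℝ)-j)+1)^mu ≤
    ∑' p : ℕ × ℕ, 1 / (lam * p.1 + p.2 + 1) ^ mu := by
  calc ∑ j ∈ Finset.range (k+1), ∑ i ∈ Finset.range (n+1),
        1 / (lam*((n:ℝ)-i)+((k:ℝ)-j)+1)^mu
      = ∑ j ∈ Finset.range (k+1), (fun m : ℕ =>
          ∑ i ∈ Finset.range (n+1), 1 / (lam*i+(m:ℝ)+1)^mu) (k+1-1-j) := by
        apply Finset.sum_congr rfl
        intro j hj
        rw [Finset.mem_range] at hj
        have hjk : j ≤ k := by omega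
        have h1 : k+1-1-j = k-j := by omega
        rw [h1]
        show _ = ∑ i ∈ Finset.range (n+1), 1 / (lam*i+((k-j : ℕ):ℝ)+1)^mu
        rw [Nat.cast_sub hjk]
        calc ∑ i ∈ Finset.range (n+1), 1 / (lam*((n:ℝ)-i)+((k:ℝ)-j)+1)^mu
            = ∑ i ∈ Finset.range (n+1), (fun m : ℕ =>
                1 / (lam*(m:ℝ)+((k:ℝ)-j)+1)^mu) (n+1-1-i) := by
              apply Finset.sum_congr rfl
              intro i hi
              rw [Finset.mem_range] at hi
              have hin : i ≤ n := by omega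
              have h2 : n+1-1-i = n-i := by omega
              rw [h2]
              show _ = 1 / (lam*((n-i : ℕ):ℝ)+((k:ℝ)-j)+1)^mu
              rw [Nat.cast_sub hin]
          _ = ∑ i ∈ Finset.range (n+1), 1 / (lam*(i:ℝ)+((k:ℝ)-j)+1)^mu :=
              Finset.sum_range_reflect (fun m : ℕ => 1 / (lam*(m:ℝ)+((k:ℝ)-j)+1)^mu) (n+1)
    _ = ∑ j ∈ Finset.range (k+1), ∑ i ∈ Finset.range (n+1), 1 / (lam*(i:ℝ)+(j:ℝ)+1)^mu :=
        Finset.sum_range_reflect (fun m : ℕ =>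
          ∑ i ∈ Finset.range (n+1), 1 / (lam*(i:ℝ)+(m:ℝ)+1)^mu) (k+1)
    _ ≤ _ := sum_recip_le hlam hmu n k

set_option maxHeartbeats 2000000 in
theorem gevrey_leibniz_algebra (lam mu R R' C₁ C₂ : ℝ)
    (hlam : 1 ≤ lam) (hmu : 2 < mu) (hR : 0 < R) (hR' : 0 < R')
    (hC₁ : 0 < C₁) (hC₂ : 0 < C₂) (k₀ n₀ : ℕ) (d₁ d₂ : ℕ → ℕ → ℝ)
    (h₁ : ∀ n ≤ n₀, ∀ k ≤ k₀, |d₁ n k| ≤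
      C₁ * Real.Gamma (lam * n + k + 1) /
        (R ^ k * R' ^ (lam * n) * (lam * n + k + 1) ^ mu))
    (h₂ : ∀ n ≤ n₀, ∀ k ≤ k₀, |d₂ n k| ≤
      C₂ * Real.Gamma (lam * n + k + 1) /
        (R ^ k * R' ^ (lam * n) * (lam * n + k + 1) ^ mu)) :
    ∀ n ≤ n₀, ∀ k ≤ k₀,
      |∑ j ∈ Finset.range (k + 1), ∑ i ∈ Finset.range (n + 1),
          (k.choose j : ℝ) * (n.choose i : ℝ) * d₁ i j * d₂ (n - i) (k - j)| ≤
        (2 * lam * 2 ^ mu * ∑' p : ℕ × ℕ, 1 / (lam * p.1 + p.2 + 1) ^ mu) *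
          C₁ * C₂ * Real.Gamma (lam * n + k + 1) /
            (R ^ k * R' ^ (lam * n) * (lam * n + k + 1) ^ mu) := by
  intro n hn k hk
  have hlam0 : (0:ℝ) < lam := by linarith
  have hmu0 : (0:ℝ) < mu := by linarith
  have hn0 : (0:ℝ) ≤ (n:ℝ) := Nat.cast_nonneg n
  have hk0 : (0:ℝ) ≤ (k:ℝ) := Nat.cast_nonneg k
  have hRk : (0:ℝ) < R ^ k := pow_pos hR k
  have hR'n : (0:ℝ) < R' ^ (lam * n) := Real.rpow_pos_of_pos hR' _
  have hbase : (0:ℝ) < lam * n + k + 1 := by nlinarith [mul_nonneg (le_of_lt hlam0) hn0]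
  have hDen : (0:ℝ) < (lam * n + k + 1) ^ mu := Real.rpow_pos_of_pos hbase _
  have hG : 0 < Real.Gamma (lam * n + k + 1) := Real.Gamma_pos_of_pos hbase
  set S := ∑' p : ℕ × ℕ, 1 / (lam * p.1 + p.2 + 1) ^ mu with hSdef
  have hS0 : 0 ≤ S := tsum_nonneg (fun p => by positivity)
  have hM0 : 0 ≤ lam * Real.Gamma (lam*n+k+1) * C₁ * C₂ / (R ^ k * R' ^ (lam*(n:ℝ))) := by
    apply le_of_lt
    apply div_pos (mul_pos (mul_pos (mul_pos hlam0 hG) hC₁) hC₂) (mul_pos hRk hR'n)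
  have hpt : ∀ j ∈ Finset.range (k+1), ∀ i ∈ Finset.range (n+1),
      |(k.choose j : ℝ) * (n.choose i : ℝ) * d₁ i j * d₂ (n - i) (k - j)| ≤
      lam * Real.Gamma (lam*n+k+1) * C₁ * C₂ / (R ^ k * R' ^ (lam*(n:ℝ))) *
        (1 / ((lam*i+j+1)^mu * (lam*((n:ℝ)-i)+((k:ℝ)-j)+1)^mu)) := by
    intro j hj i hi
    rw [Finset.mem_range] at hj hi
    have hjk : j ≤ k := by omega
    have hin : i ≤ n := by omega
    have hi' : (i:ℝ) ≤ n := Nat.cast_le.2 hin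
    have hj' : (j:ℝ) ≤ k := Nat.cast_le.2 hjk
    have hi0 : (0:ℝ) ≤ i := Nat.cast_nonneg i
    have hj0 : (0:ℝ) ≤ j := Nat.cast_nonneg j
    have hb1 := h₁ i (hin.trans hn) j (hjk.trans hk)
    have hb2 := h₂ (n-i) ((Nat.sub_le n i).trans hn) (k-j) ((Nat.sub_le k j).trans hk)
    rw [Nat.cast_sub hin, Nat.cast_sub hjk] at hb2
    have hx1 : (0:ℝ) < lam*i+j+1 := by nlinarith [mul_nonneg (le_of_lt hlam0) hi0]
    have hy1 : (0:ℝ) < lam*((n:ℝ)-i)+((k:ℝ)-j)+1 := by nlinarith [mul_nonneg (le_of_lt hlam0) (by linarith : (0:ℝ) ≤ (n:ℝ)-i)]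
    have hP₁ : (0:ℝ) < (lam*i+j+1)^mu := Real.rpow_pos_of_pos hx1 _
    have hP₂ : (0:ℝ) < (lam*((n:ℝ)-i)+((k:ℝ)-j)+1)^mu := Real.rpow_pos_of_pos hy1 _
    have hΓ₁ : 0 < Real.Gamma (lam*i+j+1) := Real.Gamma_pos_of_pos hx1
    have hΓ₂ : 0 < Real.Gamma (lam*((n:ℝ)-i)+((k:ℝ)-j)+1) := Real.Gamma_pos_of_pos hy1
    have hRj : (0:ℝ) < R^j := pow_pos hR j
    have hRkj : (0:ℝ) < R^(k-j) := pow_pos hR _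
    have hR'i : (0:ℝ) < R'^(lam*(i:ℝ)) := Real.rpow_pos_of_pos hR' _
    have hR'ni : (0:ℝ) < R'^(lam*((n:ℝ)-i)) := Real.rpow_pos_of_pos hR' _
    have hB1 : (0:ℝ) ≤ C₁ * Real.Gamma (lam*i+j+1) / (R^j * R'^(lam*(i:ℝ)) * (lam*i+j+1)^mu) :=
      le_of_lt (div_pos (mul_pos hC₁ hΓ₁) (mul_pos (mul_pos hRj hR'i) hP₁))
    calc |(k.choose j : ℝ) * (n.choose i : ℝ) * d₁ i j * d₂ (n-i) (k-j)|
        = (k.choose j : ℝ) * (n.choose i : ℝ) * |d₁ i j| * |d₂ (n-i) (k-j)| := by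
          rw [abs_mul, abs_mul, abs_mul, Nat.abs_cast, Nat.abs_cast]
      _ ≤ (k.choose j : ℝ) * (n.choose i : ℝ) *
            (C₁ * Real.Gamma (lam*i+j+1) / (R^j * R'^(lam*(i:ℝ)) * (lam*i+j+1)^mu)) *
            (C₂ * Real.Gamma (lam*((n:ℝ)-i)+((k:ℝ)-j)+1) /
              (R^(k-j) * R'^(lam*((n:ℝ)-i)) * (lam*((n:ℝ)-i)+((k:ℝ)-j)+1)^mu)) := by
          apply mul_le_mul (mul_le_mul_of_nonneg_left hb1 (by positivity)) hb2 (abs_nonneg _)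
          exact mul_nonneg (by positivity) hB1
      _ = ((k.choose j : ℝ) * (n.choose i : ℝ) *
            (Real.Gamma (lam*i+j+1) * Real.Gamma (lam*((n:ℝ)-i)+((k:ℝ)-j)+1))) *
            (C₁ * C₂ / (R^k * R'^(lam*(n:ℝ)) *
              ((lam*i+j+1)^mu * (lam*((n:ℝ)-i)+((k:ℝ)-j)+1)^mu))) := by
          rw [show R^k = R^j * R^(k-j) from by rw [← pow_add]; congr 1; omega,
            show R'^(lam*(n:ℝ)) = R'^(lam*(i:ℝ)) * R'^(lam*((n:ℝ)-i)) from by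
              rw [← Real.rpow_add hR']; congr 1; ring]
          field_simp
      _ ≤ (lam * Real.Gamma (lam*n+k+1)) *
            (C₁ * C₂ / (R^k * R'^(lam*(n:ℝ)) *
              ((lam*i+j+1)^mu * (lam*((n:ℝ)-i)+((k:ℝ)-j)+1)^mu))) := by
          apply mul_le_mul_of_nonneg_right (lemA hlam hin hjk)
          exact le_of_lt (div_pos (mul_pos hC₁ hC₂)
            (mul_pos (mul_pos hRk hR'n) (mul_pos hP₁ hP₂)))
      _ = lam * Real.Gamma (lam*n+k+1) * C₁ * C₂ / (R ^ k * R' ^ (lam*(n:ℝ))) *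
            (1 / ((lam*i+j+1)^mu * (lam*((n:ℝ)-i)+((k:ℝ)-j)+1)^mu)) := by
          field_simp
  have hsum : ∑ j ∈ Finset.range (k+1), ∑ i ∈ Finset.range (n+1),
      1 / ((lam*i+j+1)^mu * (lam*((n:ℝ)-i)+((k:ℝ)-j)+1)^mu) ≤
      2^mu / (lam*n+k+1)^mu * (S + S) := by
    calc ∑ j ∈ Finset.range (k+1), ∑ i ∈ Finset.range (n+1),
        1 / ((lam*i+j+1)^mu * (lam*((n:ℝ)-i)+((k:ℝ)-j)+1)^mu)
        ≤ ∑ j ∈ Finset.range (k+1), ∑ i ∈ Finset.range (n+1),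
            2^mu / (lam*n+k+1)^mu * (1/(lam*i+j+1)^mu + 1/(lam*((n:ℝ)-i)+((k:ℝ)-j)+1)^mu) := by
          apply Finset.sum_le_sum
          intro j hj
          apply Finset.sum_le_sum
          intro i hi
          rw [Finset.mem_range] at hj hi
          have hjk : j ≤ k := by omega
          have hin : i ≤ n := by omega
          have hi' : (i:ℝ) ≤ n := Nat.cast_le.2 hin
          have hj' : (j:ℝ) ≤ k := Nat.cast_le.2 hjk
          have hi0 : (0:ℝ) ≤ i := Nat.cast_nonneg i
          have hj0 : (0:ℝ) ≤ j := Nat.cast_nonneg j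
          have hx0 : (0:ℝ) ≤ lam*i+j := add_nonneg (mul_nonneg (le_of_lt hlam0) hi0) hj0
          have hy0 : (0:ℝ) ≤ lam*((n:ℝ)-i)+((k:ℝ)-j) := add_nonneg (mul_nonneg (le_of_lt hlam0) (by linarith)) (by linarith)
          have hb := termB hmu0 hx0 hy0
          rwa [show lam*(i:ℝ)+j+(lam*((n:ℝ)-i)+((k:ℝ)-j))+1 = lam*n+k+1 from by ring] at hb
      _ = 2^mu / (lam*n+k+1)^mu *
            ((∑ j ∈ Finset.range (k+1), ∑ i ∈ Finset.range (n+1), 1/(lam*i+j+1)^mu) +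
             (∑ j ∈ Finset.range (k+1), ∑ i ∈ Finset.range (n+1),
                1/(lam*((n:ℝ)-i)+((k:ℝ)-j)+1)^mu)) := by
          simp only [← Finset.mul_sum]
          congr 1
          rw [← Finset.sum_add_distrib]
          apply Finset.sum_congr rfl
          intro j hj
          rw [Finset.sum_add_distrib]
      _ ≤ 2^mu / (lam*n+k+1)^mu * (S + S) := by
          apply mul_le_mul_of_nonneg_left
            (add_le_add (sum_recip_le hlam hmu n k) (sum_recip_le' hlam hmu n k))
            (by positivity)
  calc |∑ j ∈ Finset.range (k + 1), ∑ i ∈ Finset.range (n + 1),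
        (k.choose j : ℝ) * (n.choose i : ℝ) * d₁ i j * d₂ (n - i) (k - j)|
      ≤ ∑ j ∈ Finset.range (k + 1), |∑ i ∈ Finset.range (n + 1),
          (k.choose j : ℝ) * (n.choose i : ℝ) * d₁ i j * d₂ (n - i) (k - j)| :=
        Finset.abs_sum_le_sum_abs _ _
    _ ≤ ∑ j ∈ Finset.range (k + 1), ∑ i ∈ Finset.range (n + 1),
          |(k.choose j : ℝ) * (n.choose i : ℝ) * d₁ i j * d₂ (n - i) (k - j)| :=
        Finset.sum_le_sum fun j _ => Finset.abs_sum_le_sum_abs _ _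
    _ ≤ ∑ j ∈ Finset.range (k + 1), ∑ i ∈ Finset.range (n + 1),
          lam * Real.Gamma (lam*n+k+1) * C₁ * C₂ / (R ^ k * R' ^ (lam*(n:ℝ))) *
            (1 / ((lam*i+j+1)^mu * (lam*((n:ℝ)-i)+((k:ℝ)-j)+1)^mu)) :=
        Finset.sum_le_sum fun j hj => Finset.sum_le_sum fun i hi => hpt j hj i hi
    _ = lam * Real.Gamma (lam*n+k+1) * C₁ * C₂ / (R ^ k * R' ^ (lam*(n:ℝ))) *
          ∑ j ∈ Finset.range (k+1), ∑ i ∈ Finset.range (n+1),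
            1 / ((lam*i+j+1)^mu * (lam*((n:ℝ)-i)+((k:ℝ)-j)+1)^mu) := by
        rw [Finset.mul_sum]
        apply Finset.sum_congr rfl
        intro j hj
        rw [Finset.mul_sum]
    _ ≤ lam * Real.Gamma (lam*n+k+1) * C₁ * C₂ / (R ^ k * R' ^ (lam*(n:ℝ))) *
          (2^mu / (lam*n+k+1)^mu * (S + S)) := mul_le_mul_of_nonneg_left hsum hM0
    _ = (2 * lam * 2 ^ mu * S) * C₁ * C₂ * Real.Gamma (lam * n + k + 1) /
          (R ^ k * R' ^ (lam * n) * (lam * n + k + 1) ^ mu) := by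
        field_simp
        ring
end
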